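/- For all real numbers p and u with 0 ≤ u < p < 1, the difference between the expression A(u) = (1 - u/2)·log(1 - u/2) - (u/2)·log(u/2) - (1 - u)·log(1 - u) + (1 - u)·λ̃((p - u)/(1 - u)) and the expression B(u) = (1 - p + u/2)·log(1 - p + u/2) - (u/2)·log(u/2) - (1 - p)·log(1 - p) + (1 - u/2)·λ̃((p - u)/(1 - u/2)) equals (1/2)·(p - u)·log((1 - u/2)/(1 - u)), where λ̃(q) = (1/2)·q·log(2d) - (q/2)·log q - (1 - q)·log(1 - q) - q/2 for a fixed real constant d > 0. -/

import Mathlib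

open Real

/-- Mean-field approximation to the monomer-dimer entropy. -/
noncomputable def lamTilde (d q : ℝ) : ℝ :=
  (1 / 2) * q * Real.log (2 * d) - (q / 2) * Real.log q
    - (1 - q) * Real.log (1 - q) - q / 2

lemma helper (d x y : ℝ) (hx : 0 < x) (hxy : x < y) :
    y * lamTilde d (x / y) = (x/2) * Real.log (2*d) - (x/2) * (Real.log x - Real.log y)
      - (y - x) * (Real.log (y - x) - Real.log y) - x/2 := by
  have hy : 0 < y := hx.trans hxy
  have hyx : 0 < y - x := by linarith
  have h1 : 1 - x/y = (y-x)/y := by rw [one_sub_div hy.ne']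
  rw [lamTilde, h1, Real.log_div hx.ne' hy.ne', Real.log_div hyx.ne' hy.ne']
  field_simp

theorem stmt_0 (d p u : ℝ) (hd : 0 < d) (hu : 0 ≤ u) (hup : u < p) (hp1 : p < 1) :
    ((1 - u / 2) * Real.log (1 - u / 2) - (u / 2) * Real.log (u / 2)
        - (1 - u) * Real.log (1 - u) + (1 - u) * lamTilde d ((p - u) / (1 - u)))
      - ((1 - p + u / 2) * Real.log (1 - p + u / 2) - (u / 2) * Real.log (u / 2)
        - (1 - p) * Real.log (1 - p) + (1 - u / 2) * lamTilde d ((p - u) / (1 - u / 2)))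
      = (1 / 2) * (p - u) * Real.log ((1 - u / 2) / (1 - u)) := by
  have hA : (0:ℝ) < 1 - u := by linarith
  have hB : (0:ℝ) < 1 - u/2 := by linarith
  have ha : (0:ℝ) < p - u := by linarith
  rw [helper d (p-u) (1-u) ha (by linarith), helper d (p-u) (1-u/2) ha (by linarith),
      Real.log_div hB.ne' hA.ne']
  have e1 : 1 - u - (p - u) = 1 - p := by ring
  have e2 : 1 - u/2 - (p - u) = 1 - p + u/2 := by ring
  rw [e1, e2]
  ring
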